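/- arXiv:1503.06497 — 3 statements merged into one kernel-verified Lean document; each statement's English description precedes it below -/
import Mathlib

section
/- If a finite sequence of natural numbers d_1 ≥ d_2 ≥ ... ≥ d_n is the degree sequence of a simple undirected graph on n vertices, then for every 1 ≤ j ≤ n, the inequality ∑_{i=1}^j d_i ≤ j(j-1) + ∑_{i=j+1}^n min(d_i, j) holds. -/
open Finset

lemma sum_fin_filter_lt (n j : ℕ) (hjn : j ≤ n) (f : ℕ → ℕ) :
    ∑ v ∈ Finset.univ.filter (fun v : Fin n => (v : ℕ) < j), f v.val
      = ∑ i ∈ Finset.range j, f i := by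
  rw [Finset.sum_filter]
  rw [Fin.sum_univ_eq_sum_range (fun i => if i < j then f i else 0) n]
  rw [← Finset.sum_filter]
  congr 1
  ext i
  simp only [Finset.mem_filter, Finset.mem_range]
  omega

lemma sum_fin_filter_ge (n j : ℕ) (f : ℕ → ℕ) :
    ∑ v ∈ Finset.univ.filter (fun v : Fin n => ¬ (v : ℕ) < j), f v.val
      = ∑ i ∈ Finset.Ico j n, f i := by
  rw [Finset.sum_filter]
  rw [Fin.sum_univ_eq_sum_range (fun i => if ¬ i < j then f i else 0) n]
  rw [← Finset.sum_filter]
  congr 1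
  ext i
  simp only [Finset.mem_filter, Finset.mem_range, Finset.mem_Ico]
  omega

/-- Erdős–Gallai, necessity: the degree sequence of a simple graph on `n`
vertices, listed in nonincreasing order, satisfies the Erdős–Gallai
inequalities. -/
theorem erdos_gallai_necessary (n : ℕ) (d : ℕ → ℕ)
    (hmono : ∀ i j : ℕ, i ≤ j → j < n → d j ≤ d i)
    (G : SimpleGraph (Fin n)) [DecidableRel G.Adj]
    (hdeg : ∀ v : Fin n, G.degree v = d v.val) :
    ∀ j : ℕ, 1 ≤ j → j ≤ n →
      ∑ i ∈ Finset.range j, d i ≤ j * (j - 1) + ∑ i ∈ Finset.Ico j n, min (d i) j := by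
  intro j hj1 hjn
  classical
  set S : Finset (Fin n) := Finset.univ.filter (fun v => (v : ℕ) < j) with hS
  have hcardS : S.card = j := by
    have := sum_fin_filter_lt n j hjn (fun _ => 1)
    simpa using this
  -- rewrite LHS as sum of degrees over S
  have hL : ∑ i ∈ Finset.range j, d i = ∑ v ∈ S, G.degree v := by
    rw [← sum_fin_filter_lt n j hjn d]
    exact Finset.sum_congr rfl (fun v _ => (hdeg v).symm)
  -- rewrite RHS sum as sum over Sᶜ
  have hR : ∑ i ∈ Finset.Ico j n, min (d i) j = ∑ v ∈ Sᶜ, min (G.degree v) j := by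
    rw [← sum_fin_filter_ge n j (fun i => min (d i) j)]
    rw [hS, Finset.compl_filter]
    exact Finset.sum_congr rfl (fun v _ => by rw [hdeg v])
  rw [hL, hR]
  -- split each degree
  have hsplit : ∀ v : Fin n,
      G.degree v = (S.filter (G.Adj v)).card + (Sᶜ.filter (G.Adj v)).card := by
    intro v
    rw [SimpleGraph.degree]
    have : G.neighborFinset v = Finset.univ.filter (G.Adj v) := by
      ext u; simp [SimpleGraph.mem_neighborFinset]
    rw [this]
    rw [← Finset.union_compl S, Finset.filter_union,
      Finset.card_union_of_disjoint]
    exact Finset.disjoint_filter_filter (disjoint_compl_right)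
  have hsum : ∑ v ∈ S, G.degree v
      = ∑ v ∈ S, (S.filter (G.Adj v)).card + ∑ v ∈ S, (Sᶜ.filter (G.Adj v)).card := by
    rw [← Finset.sum_add_distrib]
    exact Finset.sum_congr rfl (fun v _ => hsplit v)
  rw [hsum]
  gcongr
  · -- inner part ≤ j * (j-1)
    calc ∑ v ∈ S, (S.filter (G.Adj v)).card
        ≤ ∑ _v ∈ S, (j - 1) := by
          apply Finset.sum_le_sum
          intro v hv
          have hsub : S.filter (G.Adj v) ⊆ S.erase v := by
            intro u hu
            rw [Finset.mem_filter] at hu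
            exact Finset.mem_erase.2 ⟨fun h => G.irrefl (h ▸ hu.2), hu.1⟩
          calc (S.filter (G.Adj v)).card ≤ (S.erase v).card := Finset.card_le_card hsub
            _ = j - 1 := by rw [Finset.card_erase_of_mem hv, hcardS]
      _ = j * (j - 1) := by rw [Finset.sum_const, hcardS, smul_eq_mul]
  · -- crossing part
    have hswap : ∑ v ∈ S, (Sᶜ.filter (G.Adj v)).card
        = ∑ u ∈ Sᶜ, (S.filter (fun v => G.Adj v u)).card := by
      simp only [Finset.card_filter]
      rw [Finset.sum_comm]
    rw [hswap]
    apply Finset.sum_le_sum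
    intro u _
    have h1 : (S.filter (fun v => G.Adj v u)).card ≤ G.degree u := by
      rw [SimpleGraph.degree]
      apply Finset.card_le_card
      intro v hv
      rw [Finset.mem_filter] at hv
      rw [SimpleGraph.mem_neighborFinset]
      exact hv.2.symm
    have h2 : (S.filter (fun v => G.Adj v u)).card ≤ j := by
      rw [← hcardS]
      exact Finset.card_le_card (Finset.filter_subset _ _)
    exact le_min h1 h2
end

section
/- If a nonincreasing sequence of natural numbers d_1 ≥ ... ≥ d_n has even sum and satisfies ∑_{i=1}^j d_i ≤ j(j-1) + ∑_{i=j+1}^n min(d_i, j) for every 1 ≤ j ≤ n, then there exists a simple undirected graph on n vertices whose degree sequence is exactly (d_1,...,d_n). -/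
set_option linter.unusedSectionVars false

section Ops
variable {V : Type*} [Fintype V] [DecidableEq V]

/-- Add an edge between `u` and `v`. -/
def addE (G : SimpleGraph V) (u v : V) : SimpleGraph V where
  Adj x y := G.Adj x y ∨ (u ≠ v ∧ ((x = u ∧ y = v) ∨ (x = v ∧ y = u)))
  symm := by constructor; intro x y h; rcases h with h | ⟨hne, h⟩; · exact Or.inl h.symm
             · exact Or.inr ⟨hne, h.symm.imp (fun a => ⟨a.2, a.1⟩) (fun a => ⟨a.2, a.1⟩)⟩
  loopless := by constructor; intro x h; rcases h with h | ⟨hne, ⟨h1,h2⟩ | ⟨h1,h2⟩⟩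
                 · exact G.irrefl h
                 · exact hne (h1 ▸ h2 ▸ rfl)
                 · exact hne (h2 ▸ h1 ▸ rfl)

/-- Delete the edge between `u` and `v`. -/
def delE (G : SimpleGraph V) (u v : V) : SimpleGraph V where
  Adj x y := G.Adj x y ∧ ¬((x = u ∧ y = v) ∨ (x = v ∧ y = u))
  symm := by constructor; intro x y ⟨h, h2⟩; exact ⟨h.symm, fun c => h2 (c.symm.imp (fun a => ⟨a.2,a.1⟩) (fun a => ⟨a.2,a.1⟩))⟩
  loopless := ⟨fun x h => G.irrefl h.1⟩

instance instDecAddE (G : SimpleGraph V) [DecidableRel G.Adj] (u v : V) :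
    DecidableRel (addE G u v).Adj := fun x y => by unfold addE; infer_instance

instance instDecDelE (G : SimpleGraph V) [DecidableRel G.Adj] (u v : V) :
    DecidableRel (delE G u v).Adj := fun x y => by unfold delE; infer_instance

lemma adj_addE (G : SimpleGraph V) {u v : V} (huv : u ≠ v) (x y : V) :
    (addE G u v).Adj x y ↔ (G.Adj x y ∨ ((x = u ∧ y = v) ∨ (x = v ∧ y = u))) := by
  show (G.Adj x y ∨ _) ↔ _
  constructor
  · rintro (h | ⟨_, h⟩); exacts [Or.inl h, Or.inr h]
  · rintro (h | h); exacts [Or.inl h, Or.inr ⟨huv, h⟩]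

lemma adj_delE (G : SimpleGraph V) (u v x y : V) :
    (delE G u v).Adj x y ↔ (G.Adj x y ∧ ¬((x = u ∧ y = v) ∨ (x = v ∧ y = u))) :=
  Iff.rfl

lemma nf_addE_u (G : SimpleGraph V) [DecidableRel G.Adj] {u v : V} (huv : u ≠ v) :
    (addE G u v).neighborFinset u = insert v (G.neighborFinset u) := by
  ext a
  rw [Finset.mem_insert, SimpleGraph.mem_neighborFinset, SimpleGraph.mem_neighborFinset,
    adj_addE G huv]
  constructor
  · rintro (h1 | ⟨h1,h2⟩ | ⟨h1,h2⟩)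
    · exact Or.inr h1
    · exact Or.inl h2
    · exact absurd h1 huv
  · rintro (rfl | h1)
    · exact Or.inr (Or.inl ⟨rfl, rfl⟩)
    · exact Or.inl h1

lemma nf_addE_v (G : SimpleGraph V) [DecidableRel G.Adj] {u v : V} (huv : u ≠ v) :
    (addE G u v).neighborFinset v = insert u (G.neighborFinset v) := by
  ext a
  rw [Finset.mem_insert, SimpleGraph.mem_neighborFinset, SimpleGraph.mem_neighborFinset,
    adj_addE G huv]
  constructor
  · rintro (h1 | ⟨h1,h2⟩ | ⟨h1,h2⟩)
    · exact Or.inr h1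
    · exact absurd h1.symm huv
    · exact Or.inl h2
  · rintro (rfl | h1)
    · exact Or.inr (Or.inr ⟨rfl, rfl⟩)
    · exact Or.inl h1

lemma nf_addE_other (G : SimpleGraph V) [DecidableRel G.Adj] {u v x : V} (hxu : x ≠ u)
    (hxv : x ≠ v) : (addE G u v).neighborFinset x = G.neighborFinset x := by
  ext a
  rw [SimpleGraph.mem_neighborFinset, SimpleGraph.mem_neighborFinset]
  show (G.Adj x a ∨ _) ↔ _
  constructor
  · rintro (h1 | ⟨_, ⟨h1,h2⟩ | ⟨h1,h2⟩⟩)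
    · exact h1
    · exact absurd h1 hxu
    · exact absurd h1 hxv
  · exact fun h1 => Or.inl h1

lemma degree_addE (G : SimpleGraph V) [DecidableRel G.Adj] {u v : V} (huv : u ≠ v)
    (h : ¬ G.Adj u v) (x : V) :
    (addE G u v).degree x = G.degree x + (if x = u ∨ x = v then 1 else 0) := by
  by_cases hxu : x = u
  · subst hxu
    rw [SimpleGraph.degree, SimpleGraph.degree, nf_addE_u G huv,
      Finset.card_insert_of_notMem (by simpa using h), if_pos (Or.inl rfl)]
  · by_cases hxv : x = v
    · subst hxv
      rw [SimpleGraph.degree, SimpleGraph.degree, nf_addE_v G huv,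
        Finset.card_insert_of_notMem (by simpa using fun hc => h hc.symm),
        if_pos (Or.inr rfl)]
    · rw [SimpleGraph.degree, SimpleGraph.degree, nf_addE_other G hxu hxv,
        if_neg (by tauto), Nat.add_zero]

lemma nf_delE_u (G : SimpleGraph V) [DecidableRel G.Adj] (u v : V) :
    (delE G u v).neighborFinset u = (G.neighborFinset u).erase v := by
  ext a
  rw [Finset.mem_erase, SimpleGraph.mem_neighborFinset, SimpleGraph.mem_neighborFinset]
  show (G.Adj u a ∧ _) ↔ _
  constructor
  · rintro ⟨h1, h2⟩
    exact ⟨fun hc => h2 (Or.inl ⟨rfl, hc⟩), h1⟩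
  · rintro ⟨h1, h2⟩
    refine ⟨h2, ?_⟩
    rintro (⟨heq, rfl⟩ | ⟨rfl, rfl⟩)
    · exact h1 rfl
    · exact G.irrefl h2

lemma nf_delE_v (G : SimpleGraph V) [DecidableRel G.Adj] (u v : V) :
    (delE G u v).neighborFinset v = (G.neighborFinset v).erase u := by
  ext a
  rw [Finset.mem_erase, SimpleGraph.mem_neighborFinset, SimpleGraph.mem_neighborFinset]
  show (G.Adj v a ∧ _) ↔ _
  constructor
  · rintro ⟨h1, h2⟩
    exact ⟨fun hc => h2 (Or.inr ⟨rfl, hc⟩), h1⟩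
  · rintro ⟨h1, h2⟩
    refine ⟨h2, ?_⟩
    rintro (⟨rfl, rfl⟩ | ⟨heq, rfl⟩)
    · exact G.irrefl h2
    · exact h1 rfl

lemma nf_delE_other (G : SimpleGraph V) [DecidableRel G.Adj] {u v x : V} (hxu : x ≠ u)
    (hxv : x ≠ v) : (delE G u v).neighborFinset x = G.neighborFinset x := by
  ext a
  rw [SimpleGraph.mem_neighborFinset, SimpleGraph.mem_neighborFinset]
  show (G.Adj x a ∧ _) ↔ _
  constructor
  · exact fun h1 => h1.1
  · intro h1
    refine ⟨h1, ?_⟩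
    rintro (⟨rfl, rfl⟩ | ⟨rfl, rfl⟩)
    · exact hxu rfl
    · exact hxv rfl

lemma degree_delE (G : SimpleGraph V) [DecidableRel G.Adj] {u v : V}
    (h : G.Adj u v) (x : V) :
    G.degree x = (delE G u v).degree x + (if x = u ∨ x = v then 1 else 0) := by
  by_cases hxu : x = u
  · subst hxu
    rw [SimpleGraph.degree, SimpleGraph.degree, nf_delE_u,
      Finset.card_erase_of_mem (by simpa using h), if_pos (Or.inl rfl)]
    have : 0 < (G.neighborFinset x).card := Finset.card_pos.2 ⟨v, by simpa using h⟩
    omega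
  · by_cases hxv : x = v
    · subst hxv
      rw [SimpleGraph.degree, SimpleGraph.degree, nf_delE_v,
        Finset.card_erase_of_mem (by simpa using h.symm), if_pos (Or.inr rfl)]
      have : 0 < (G.neighborFinset x).card := Finset.card_pos.2 ⟨u, by simpa using h.symm⟩
      omega
    · rw [SimpleGraph.degree, SimpleGraph.degree, nf_delE_other G hxu hxv,
        if_neg (by tauto), Nat.add_zero]

end Ops
open Finset

lemma EGpres (n s t : ℕ) (d : ℕ → ℕ)
    (hmono : ∀ i j : ℕ, i ≤ j → j < n → d j ≤ d i)
    (heven : Even (∑ i ∈ Finset.range n, d i))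
    (hEG : ∀ j : ℕ, 1 ≤ j → j ≤ n →
      ∑ i ∈ Finset.range j, d i ≤ j * (j - 1) + ∑ i ∈ Finset.Ico j n, min (d i) j)
    (hs_lt : s < n) (hds : 1 ≤ d s)
    (ht_lt : t < s) (hdt : d t = d 0)
    (hblock : ∀ i, i ≤ t → d i = d 0)
    (hcase : d s = d 0 ∨ ∀ i, t < i → i < n → d i < d 0)
    (j : ℕ) (hj1 : 1 ≤ j) (hjn : j ≤ n) :
    ∑ i ∈ Finset.range j, (if i = t ∨ i = s then d i - 1 else d i) ≤
      j * (j - 1) + ∑ i ∈ Finset.Ico j n, min (if i = t ∨ i = s then d i - 1 else d i) j := by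
  set d' : ℕ → ℕ := fun i => if i = t ∨ i = s then d i - 1 else d i with hd'
  show ∑ i ∈ Finset.range j, d' i ≤ j * (j - 1) + ∑ i ∈ Finset.Ico j n, min (d' i) j
  have hts : t ≠ s := ht_lt.ne
  have hd0s : d s ≤ d 0 := hmono 0 s (Nat.zero_le _) hs_lt
  have hd01 : 1 ≤ d 0 := le_trans hds hd0s
  have hdt1 : 1 ≤ d t := by rw [hdt]; exact hd01
  have hd't : d' t = d t - 1 := by
    show (if t = t ∨ t = s then d t - 1 else d t) = d t - 1
    rw [if_pos (Or.inl rfl)]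
  have hd's : d' s = d s - 1 := by
    show (if s = t ∨ s = s then d s - 1 else d s) = d s - 1
    rw [if_pos (Or.inr rfl)]
  have hd'o : ∀ i, i ≠ t → i ≠ s → d' i = d i := by
    intro i h1 h2
    show (if i = t ∨ i = s then d i - 1 else d i) = d i
    rw [if_neg (by tauto)]
  have hdd' : ∀ i, d i = d' i + (if i = t ∨ i = s then 1 else 0) := by
    intro i
    by_cases h1 : i = t
    · subst h1; rw [hd't, if_pos (Or.inl rfl)]; omega
    · by_cases h2 : i = s
      · rw [h2, hd's, if_pos (Or.inr rfl)]; omega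
      · rw [hd'o i h1 h2, if_neg (by tauto)]
        omega
  have hsumF : ∀ F : Finset ℕ, ∑ i ∈ F, d i =
      (∑ i ∈ F, d' i) + ((if t ∈ F then 1 else 0) + (if s ∈ F then 1 else 0)) := by
    intro F
    rw [Finset.sum_congr rfl (fun i _ => hdd' i), Finset.sum_add_distrib]
    congr 1
    have hpt : ∀ i, (if i = t ∨ i = s then (1:ℕ) else 0) =
        (if i = t then 1 else 0) + (if i = s then 1 else 0) := by
      intro i
      by_cases h1 : i = t
      · subst h1
        rw [if_pos (Or.inl rfl), if_pos rfl, if_neg hts]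
      · by_cases h2 : i = s
        · rw [h2, if_pos (Or.inr rfl), if_neg (h2 ▸ h1), if_pos rfl]
        · rw [if_neg (by tauto), if_neg h1, if_neg h2]
    rw [Finset.sum_congr rfl (fun i _ => hpt i), Finset.sum_add_distrib,
      Finset.sum_ite_eq' F t (fun _ => 1), Finset.sum_ite_eq' F s (fun _ => 1)]
  rcases lt_or_ge s j with hjs | hjs
  · -- case s < j : both t and s in the prefix
    have hL : ∑ i ∈ Finset.range j, d i = (∑ i ∈ Finset.range j, d' i) + 2 := by
      have h := hsumF (Finset.range j)
      rw [if_pos (Finset.mem_range.2 (lt_trans ht_lt hjs)), if_pos (Finset.mem_range.2 hjs)] at h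
      omega
    have hTail : ∑ i ∈ Finset.Ico j n, min (d' i) j = ∑ i ∈ Finset.Ico j n, min (d i) j := by
      refine Finset.sum_congr rfl (fun i hi => ?_)
      have hij : j ≤ i := (Finset.mem_Ico.1 hi).1
      rw [hd'o i (by omega) (by omega)]
    have h := hEG j hj1 hjn
    omega
  · rcases lt_or_ge t j with hjt | hjt
    · -- case t < j ≤ s
      have hL : ∑ i ∈ Finset.range j, d i = (∑ i ∈ Finset.range j, d' i) + 1 := by
        have h := hsumF (Finset.range j)
        rw [if_pos (Finset.mem_range.2 hjt), if_neg (by rw [Finset.mem_range]; omega)] at h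
        omega
      have hTail : ∑ i ∈ Finset.Ico j n, min (d i) j ≤
          (∑ i ∈ Finset.Ico j n, min (d' i) j) + 1 := by
        have hpw : ∀ i ∈ Finset.Ico j n, min (d i) j ≤ min (d' i) j + (if i = s then 1 else 0) := by
          intro i hi
          have hij : j ≤ i := (Finset.mem_Ico.1 hi).1
          by_cases h2 : i = s
          · rw [h2, hd's, if_pos rfl]
            omega
          · rw [hd'o i (by omega) h2, if_neg h2]
            omega
        calc ∑ i ∈ Finset.Ico j n, min (d i) j
            ≤ ∑ i ∈ Finset.Ico j n, (min (d' i) j + (if i = s then 1 else 0)) :=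
              Finset.sum_le_sum hpw
          _ = (∑ i ∈ Finset.Ico j n, min (d' i) j) +
              (∑ i ∈ Finset.Ico j n, (if i = s then 1 else 0)) := Finset.sum_add_distrib
          _ ≤ (∑ i ∈ Finset.Ico j n, min (d' i) j) + 1 := by
              rw [Finset.sum_ite_eq' (Finset.Ico j n) s (fun _ => 1)]
              split <;> omega
      have h := hEG j hj1 hjn
      omega
    · -- case j ≤ t
      have hLd : ∑ i ∈ Finset.range j, d i = j * d 0 := by
        rw [Finset.sum_congr rfl (fun i hi => hblock i (by
          have := Finset.mem_range.1 hi; omega))]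
        rw [Finset.sum_const, Finset.card_range, smul_eq_mul]
      have hLd' : ∑ i ∈ Finset.range j, d' i = j * d 0 := by
        have h : ∑ i ∈ Finset.range j, d' i = ∑ i ∈ Finset.range j, d i := by
          refine Finset.sum_congr rfl (fun i hi => ?_)
          have := Finset.mem_range.1 hi
          exact hd'o i (by omega) (by omega)
        rw [h, hLd]
      rcases le_or_gt (d 0) j with hd0 | hd0
      · -- subcase d 0 ≤ j : parity argument
        have hTail : ∑ i ∈ Finset.Ico j n, d i = (∑ i ∈ Finset.Ico j n, min (d' i) j) + 2 := by
          have h1 : ∑ i ∈ Finset.Ico j n, min (d' i) j = ∑ i ∈ Finset.Ico j n, d' i := by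
            refine Finset.sum_congr rfl (fun i hi => ?_)
            have hin : i < n := (Finset.mem_Ico.1 hi).2
            have h2 : d i ≤ d 0 := hmono 0 i (Nat.zero_le _) hin
            have h3 : d' i ≤ d i := by
              by_cases ha : i = t
              · rw [ha, hd't]; omega
              · by_cases hb : i = s
                · rw [hb, hd's]; omega
                · rw [hd'o i ha hb]
            omega
          have h := hsumF (Finset.Ico j n)
          rw [if_pos (Finset.mem_Ico.2 ⟨hjt, by omega⟩),
            if_pos (Finset.mem_Ico.2 ⟨by omega, hs_lt⟩)] at h
          omega
        have hS : ∑ i ∈ Finset.range n, d i = j * d 0 + ∑ i ∈ Finset.Ico j n, d i := by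
          rw [Finset.range_eq_Ico, ← Finset.sum_Ico_consecutive _ (Nat.zero_le j) hjn,
            ← Finset.range_eq_Ico, hLd]
        -- strict inequality
        have hstrict : 2 * (j * d 0) < j * (j - 1) + ∑ i ∈ Finset.range n, d i := by
          have h1 : ∑ i ∈ Finset.range (t+1), d i = (t+1) * d 0 := by
            rw [Finset.sum_congr rfl (fun i hi => hblock i (by
              have := Finset.mem_range.1 hi; omega))]
            rw [Finset.sum_const, Finset.card_range, smul_eq_mul]
          have h2 : s + 1 - (t + 1) ≤ ∑ i ∈ Finset.Ico (t+1) (s+1), d i := by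
            have hc : ∑ _i ∈ Finset.Ico (t+1) (s+1), 1 = s + 1 - (t+1) := by
              rw [Finset.sum_const, Nat.card_Ico, smul_eq_mul, mul_one]
            calc s + 1 - (t + 1) = ∑ _i ∈ Finset.Ico (t+1) (s+1), 1 := hc.symm
              _ ≤ ∑ i ∈ Finset.Ico (t+1) (s+1), d i := by
                  refine Finset.sum_le_sum (fun i hi => ?_)
                  have h3 := Finset.mem_Ico.1 hi
                  exact le_trans hds (hmono i s (by omega) hs_lt)
          have h3 : ∑ i ∈ Finset.range (s+1), d i ≤ ∑ i ∈ Finset.range n, d i :=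
            Finset.sum_le_sum_of_subset (Finset.range_subset_range.2 (by omega))
          have h4 : ∑ i ∈ Finset.range (s+1), d i =
              ∑ i ∈ Finset.range (t+1), d i + ∑ i ∈ Finset.Ico (t+1) (s+1), d i := by
            rw [Finset.range_eq_Ico, ← Finset.sum_Ico_consecutive _ (Nat.zero_le (t+1)) (by omega),
              ← Finset.range_eq_Ico]
          have h6 : (j+1) * d 0 ≤ (t+1) * d 0 := Nat.mul_le_mul_right _ (by omega)
          have h7 : (j-1) * d 0 ≤ (j-1) * j := Nat.mul_le_mul_left _ hd0
          have h8 : 2 * (j * d 0) = (j+1) * d 0 + (j-1) * d 0 := by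
            cases' Nat.exists_eq_add_of_le hj1 with k hk
            subst hk
            have e1 : 1 + k + 1 = 1 + (k + 1) := by omega
            have e2 : 1 + k - 1 = k := by omega
            rw [e1, e2, Nat.add_mul, Nat.add_mul, Nat.one_mul, Nat.add_mul, Nat.one_mul]
            ring
          have h9 : (j-1) * j = j * (j - 1) := Nat.mul_comm _ _
          omega
        -- parity
        obtain ⟨σ, hσ⟩ := heven
        have hjj : Even (j * (j-1)) := by
          rcases Nat.even_or_odd j with he | ho
          · exact he.mul_right _
          · have : Even (j - 1) := Nat.Odd.sub_odd ho odd_one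
            exact this.mul_left _
        obtain ⟨a, ha⟩ := hjj
        omega
      · -- subcase j < d 0
        rcases lt_or_ge j (d s) with hds2 | hds2
        · -- mins unchanged
          have hTail : ∑ i ∈ Finset.Ico j n, min (d' i) j = ∑ i ∈ Finset.Ico j n, min (d i) j := by
            refine Finset.sum_congr rfl (fun i hi => ?_)
            by_cases h1 : i = t
            · rw [h1, hd't, hdt]
              omega
            · by_cases h2 : i = s
              · rw [h2, hd's]
                omega
              · rw [hd'o i h1 h2]
          have h := hEG j hj1 hjn
          omega
        · -- HARD case : d s ≤ j < d 0
          have hball : ∀ i, t < i → i < n → d i < d 0 := by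
            rcases hcase with h | h
            · omega
            · exact h
          have hQ2ne : t ∈ (Finset.range n).filter (fun i => j+1 ≤ d i) := by
            rw [Finset.mem_filter, Finset.mem_range]
            exact ⟨by omega, by omega⟩
          set p' := ((Finset.range n).filter (fun i => j+1 ≤ d i)).max' ⟨t, hQ2ne⟩ with hp'
          have hp'mem := ((Finset.range n).filter (fun i => j+1 ≤ d i)).max'_mem ⟨t, hQ2ne⟩
          rw [Finset.mem_filter, Finset.mem_range] at hp'mem
          have hp'n : p' < n := hp'mem.1
          have htp' : t ≤ p' := Finset.le_max' _ t hQ2ne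
          have hlow : ∀ i, i ≤ p' → j + 1 ≤ d i := fun i hi =>
            le_trans hp'mem.2 (hmono i p' hi hp'n)
          have hhigh : ∀ i, p' < i → i < n → d i ≤ j := by
            intro i hi hin
            by_contra hc
            push_neg at hc
            have h5 : i ∈ (Finset.range n).filter (fun i => j+1 ≤ d i) := by
              rw [Finset.mem_filter, Finset.mem_range]; exact ⟨hin, hc⟩
            have := Finset.le_max' _ i h5
            omega
          have hps : p' < s := by
            by_contra hc
            push_neg at hc
            have := hlow s hc
            omega
          clear_value p'
          clear hp' hp'mem hQ2ne
          -- tail splits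
          have hT : ∑ i ∈ Finset.Ico j n, min (d i) j
              = (p' + 1 - j) * j + ∑ i ∈ Finset.Ico (p'+1) n, d i := by
            rw [← Finset.sum_Ico_consecutive (fun i => min (d i) j)
              (show j ≤ p'+1 by omega) (show p'+1 ≤ n by omega)]
            congr 1
            · have hc : ∀ i ∈ Finset.Ico j (p'+1), min (d i) j = j := by
                intro i hi
                have h3 := Finset.mem_Ico.1 hi
                have := hlow i (by omega)
                omega
              rw [Finset.sum_congr rfl hc, Finset.sum_const, Nat.card_Ico, smul_eq_mul]
            · refine Finset.sum_congr rfl (fun i hi => ?_)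
              have h3 := Finset.mem_Ico.1 hi
              have := hhigh i (by omega) h3.2
              omega
          have hSpos : 1 ≤ ∑ i ∈ Finset.Ico (p'+1) n, d i :=
            le_trans hds (Finset.single_le_sum (f := d) (fun i _ => Nat.zero_le _)
              (Finset.mem_Ico.2 ⟨by omega, hs_lt⟩))
          -- EG at j+1
          have hL1 : ∑ i ∈ Finset.range (j+1), d i = (j+1) * d 0 := by
            rw [Finset.sum_congr rfl (fun i hi => hblock i (by
              have := Finset.mem_range.1 hi; omega))]
            rw [Finset.sum_const, Finset.card_range, smul_eq_mul]
          have hT1 : ∑ i ∈ Finset.Ico (j+1) n, min (d i) (j+1)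
              = (p' + 1 - (j+1)) * (j+1) + ∑ i ∈ Finset.Ico (p'+1) n, d i := by
            rw [← Finset.sum_Ico_consecutive (fun i => min (d i) (j+1))
              (show j+1 ≤ p'+1 by omega) (show p'+1 ≤ n by omega)]
            congr 1
            · have hc : ∀ i ∈ Finset.Ico (j+1) (p'+1), min (d i) (j+1) = j+1 := by
                intro i hi
                have h3 := Finset.mem_Ico.1 hi
                have := hlow i (by omega)
                omega
              rw [Finset.sum_congr rfl hc, Finset.sum_const, Nat.card_Ico, smul_eq_mul]
            · refine Finset.sum_congr rfl (fun i hi => ?_)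
              have h3 := Finset.mem_Ico.1 hi
              have := hhigh i (by omega) h3.2
              omega
          have hEG1 := hEG (j+1) (by omega) (by omega)
          -- the strict inequality at j
          have hstrict : j * d 0 + 1 ≤ j * (j - 1) + ∑ i ∈ Finset.Ico j n, min (d i) j := by
            by_contra hcon
            push_neg at hcon
            set A := ∑ i ∈ Finset.Ico (p'+1) n, d i with hA
            clear_value A
            have hjp : j ≤ p' := le_trans hjt htp'
            have hcon2 : j * (j-1) + ((p' + 1 - j) * j + A) ≤ j * d 0 := by omega
            have hEG2 : (j+1) * d 0 ≤ (j+1) * j + ((p' + 1 - (j+1)) * (j+1) + A) := by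
              have hb : (j+1) * ((j+1) - 1) = (j+1) * j := by rw [Nat.add_sub_cancel]
              omega
            obtain ⟨q, hq⟩ := Nat.exists_eq_add_of_le hjp
            obtain ⟨k, hk⟩ := Nat.exists_eq_add_of_le hj1
            have e1 : p' + 1 - j = q + 1 := by omega
            have e2 : j - 1 = k := by omega
            have e3 : p' + 1 - (j + 1) = q := by omega
            rw [e2, e1] at hcon2
            rw [e3] at hEG2
            have c1 := (Nat.cast_le (α := ℤ)).2 hcon2
            have c2 := (Nat.cast_le (α := ℤ)).2 hEG2
            push_cast at c1 c2
            have c3 : (1:ℤ) ≤ (A:ℤ) := by exact_mod_cast hSpos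
            have che : (j:ℤ) * k + j = j * j := by
              have hjk : (j:ℤ) = 1 + (k:ℤ) := by exact_mod_cast hk
              rw [hjk]; ring
            have c4 : (d 0 : ℤ) ≤ (j:ℤ) + q := by linarith
            have c5 : (j:ℤ) * (d 0) ≤ (j:ℤ) * ((j:ℤ) + q) :=
              mul_le_mul_of_nonneg_left c4 (by positivity)
            linarith [c1, c3, c5, che]
          have hTail : ∑ i ∈ Finset.Ico j n, min (d i) j ≤
              (∑ i ∈ Finset.Ico j n, min (d' i) j) + 1 := by
            have hpw : ∀ i ∈ Finset.Ico j n, min (d i) j ≤ min (d' i) j + (if i = s then 1 else 0) := by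
              intro i hi
              by_cases h1 : i = t
              · rw [h1, hd't, if_neg hts, hdt]
                omega
              · by_cases h2 : i = s
                · rw [h2, hd's, if_pos rfl]
                  omega
                · rw [hd'o i h1 h2, if_neg h2]
                  omega
            calc ∑ i ∈ Finset.Ico j n, min (d i) j
                ≤ ∑ i ∈ Finset.Ico j n, (min (d' i) j + (if i = s then 1 else 0)) :=
                  Finset.sum_le_sum hpw
              _ = (∑ i ∈ Finset.Ico j n, min (d' i) j) +
                  (∑ i ∈ Finset.Ico j n, (if i = s then 1 else 0)) := Finset.sum_add_distrib
              _ ≤ (∑ i ∈ Finset.Ico j n, min (d' i) j) + 1 := by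
                  rw [Finset.sum_ite_eq' (Finset.Ico j n) s (fun _ => 1)]
                  split <;> omega
          omega

theorem EGaux (n : ℕ) (S : ℕ) : ∀ d : ℕ → ℕ, (∑ i ∈ Finset.range n, d i) = S →
    (∀ i j : ℕ, i ≤ j → j < n → d j ≤ d i) →
    Even (∑ i ∈ Finset.range n, d i) →
    (∀ j : ℕ, 1 ≤ j → j ≤ n →
      ∑ i ∈ Finset.range j, d i ≤ j * (j - 1) + ∑ i ∈ Finset.Ico j n, min (d i) j) →
    ∃ (G : SimpleGraph (Fin n)) (_ : DecidableRel G.Adj),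
      ∀ v : Fin n, G.degree v = d v.val := by
  induction S using Nat.strong_induction_on with
  | _ S IH =>
  intro d hsum hmono heven hEG
  rcases Nat.eq_zero_or_pos S with hS0 | hSpos
  · subst hS0
    refine ⟨⊥, inferInstance, fun v => ?_⟩
    rw [SimpleGraph.bot_degree]
    have := (Finset.sum_eq_zero_iff.1 hsum) v.val (Finset.mem_range.2 v.isLt)
    omega
  · -- S > 0
    have hn0 : 0 < n := by
      rcases Nat.eq_zero_or_pos n with h | h
      · subst h; simp at hsum; omega
      · exact h
    have hPne : ∃ i, i ∈ (Finset.range n).filter (fun i => 1 ≤ d i) := by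
      by_contra hc
      push_neg at hc
      have hz : ∀ i ∈ Finset.range n, d i = 0 := by
        intro i hi
        by_contra hzi
        exact hc i (Finset.mem_filter.2 ⟨hi, by omega⟩)
      rw [Finset.sum_eq_zero hz] at hsum
      omega
    obtain ⟨i0, hi0⟩ := hPne
    set s := ((Finset.range n).filter (fun i => 1 ≤ d i)).max' ⟨i0, hi0⟩ with hsdef
    have hsmem := ((Finset.range n).filter (fun i => 1 ≤ d i)).max'_mem ⟨i0, hi0⟩
    rw [Finset.mem_filter, Finset.mem_range] at hsmem
    have hs_lt : s < n := hsmem.1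
    have hds : 1 ≤ d s := hsmem.2
    have hzero : ∀ i, s < i → i < n → d i = 0 := by
      intro i h1 h2
      by_contra hc
      have hmem : i ∈ (Finset.range n).filter (fun i => 1 ≤ d i) :=
        Finset.mem_filter.2 ⟨Finset.mem_range.2 h2, by omega⟩
      have := Finset.le_max' _ i hmem
      omega
    clear_value s
    clear hsdef hsmem hi0
    have hd01 : 1 ≤ d 0 := le_trans hds (hmono 0 s (Nat.zero_le _) hs_lt)
    -- d 0 ≤ s from EG at 1
    have hs_ge : d 0 ≤ s := by
      have h := hEG 1 le_rfl (by omega)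
      have h1 : ∑ i ∈ Finset.range 1, d i = d 0 := by simp
      have h2 : ∑ i ∈ Finset.Ico 1 (s+1), min (d i) 1 + ∑ i ∈ Finset.Ico (s+1) n, min (d i) 1
          = ∑ i ∈ Finset.Ico 1 n, min (d i) 1 :=
        Finset.sum_Ico_consecutive _ (by omega) (by omega)
      have h3 : ∑ i ∈ Finset.Ico 1 (s+1), min (d i) 1 = (s + 1 - 1) * 1 := by
        have hc : ∀ i ∈ Finset.Ico 1 (s+1), min (d i) 1 = 1 := by
          intro i hi
          have h4 := Finset.mem_Ico.1 hi
          have h5 : d s ≤ d i := hmono i s (by omega) hs_lt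
          omega
        rw [Finset.sum_congr rfl hc, Finset.sum_const, Nat.card_Ico, smul_eq_mul]
      have h4 : ∑ i ∈ Finset.Ico (s+1) n, min (d i) 1 = 0 := by
        apply Finset.sum_eq_zero
        intro i hi
        have h5 := Finset.mem_Ico.1 hi
        rw [hzero i (by omega) h5.2]
        simp
      omega
    have hs1 : 1 ≤ s := le_trans hd01 hs_ge
    -- define t
    have hQt : 0 ∈ (Finset.range n).filter (fun i => d i = d 0) :=
      Finset.mem_filter.2 ⟨Finset.mem_range.2 hn0, rfl⟩
    set t0 := ((Finset.range n).filter (fun i => d i = d 0)).max' ⟨0, hQt⟩ with ht0def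
    have ht0mem := ((Finset.range n).filter (fun i => d i = d 0)).max'_mem ⟨0, hQt⟩
    rw [Finset.mem_filter, Finset.mem_range] at ht0mem
    have hdt0 : d t0 = d 0 := ht0mem.2
    have ht0max : ∀ i, i < n → d i = d 0 → i ≤ t0 := by
      intro i h1 h2
      exact Finset.le_max' ((Finset.range n).filter (fun i => d i = d 0)) i
        (Finset.mem_filter.2 ⟨Finset.mem_range.2 h1, h2⟩)
    have ht0s : t0 ≤ s := by
      by_contra hc
      push_neg at hc
      have := hzero t0 hc ht0mem.1
      omega
    clear_value t0
    clear ht0def ht0mem hQt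
    set t := if t0 = s then s - 1 else t0 with htdef
    have ht_lt : t < s := by
      rw [htdef]; split_ifs with h
      · omega
      · omega
    have hdt : d t = d 0 := by
      rw [htdef]; split_ifs with h
      · have h1 : d s ≤ d (s-1) := hmono (s-1) s (by omega) hs_lt
        have h2 : d (s-1) ≤ d 0 := hmono 0 (s-1) (Nat.zero_le _) (by omega)
        rw [h] at hdt0
        omega
      · exact hdt0
    have hblock : ∀ i, i ≤ t → d i = d 0 := by
      intro i hi
      have h1 : d i ≤ d 0 := hmono 0 i (Nat.zero_le _) (by omega)
      have h2 : d t ≤ d i := hmono i t hi (by omega)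
      omega
    have hcase : (d s = d 0 ∧ t = s - 1) ∨ ∀ i, t < i → i < n → d i < d 0 := by
      by_cases h : t0 = s
      · left
        constructor
        · rw [← h]; exact hdt0
        · rw [htdef, if_pos h]
      · right
        intro i h1 h2
        have h3 : d i ≤ d 0 := hmono 0 i (Nat.zero_le _) h2
        by_contra hc
        push_neg at hc
        have h4 : d i = d 0 := by omega
        have h5 := ht0max i h2 h4
        rw [htdef, if_neg h] at h1
        omega
    clear_value t
    clear htdef ht0s ht0max hdt0
    -- the reduced sequence
    set d' : ℕ → ℕ := fun i => if i = t ∨ i = s then d i - 1 else d i with hd'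
    have hts : t ≠ s := ht_lt.ne
    have hdt1 : 1 ≤ d t := by rw [hdt]; exact hd01
    have hd't : d' t = d t - 1 := by
      show (if t = t ∨ t = s then d t - 1 else d t) = d t - 1
      rw [if_pos (Or.inl rfl)]
    have hd's : d' s = d s - 1 := by
      show (if s = t ∨ s = s then d s - 1 else d s) = d s - 1
      rw [if_pos (Or.inr rfl)]
    have hd'o : ∀ i, i ≠ t → i ≠ s → d' i = d i := by
      intro i h1 h2
      show (if i = t ∨ i = s then d i - 1 else d i) = d i
      rw [if_neg (by tauto)]
    have hsum2 : ∑ i ∈ Finset.range n, d i = (∑ i ∈ Finset.range n, d' i) + 2 := by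
      have hdd' : ∀ i, d i = d' i + (if i = t ∨ i = s then 1 else 0) := by
        intro i
        by_cases h1 : i = t
        · subst h1; rw [hd't, if_pos (Or.inl rfl)]; omega
        · by_cases h2 : i = s
          · rw [h2, hd's, if_pos (Or.inr rfl)]; omega
          · rw [hd'o i h1 h2, if_neg (by tauto)]
            omega
      rw [Finset.sum_congr rfl (fun i _ => hdd' i), Finset.sum_add_distrib]
      congr 1
      have hpt : ∀ i, (if i = t ∨ i = s then (1:ℕ) else 0) =
          (if i = t then 1 else 0) + (if i = s then 1 else 0) := by
        intro i
        by_cases h1 : i = t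
        · subst h1
          rw [if_pos (Or.inl rfl), if_pos rfl, if_neg hts]
        · by_cases h2 : i = s
          · rw [h2, if_pos (Or.inr rfl), if_neg (h2 ▸ h1), if_pos rfl]
          · rw [if_neg (by tauto), if_neg h1, if_neg h2]
      rw [Finset.sum_congr rfl (fun i _ => hpt i), Finset.sum_add_distrib,
        Finset.sum_ite_eq' _ t (fun _ => 1), Finset.sum_ite_eq' _ s (fun _ => 1),
        if_pos (Finset.mem_range.2 (by omega)), if_pos (Finset.mem_range.2 hs_lt)]
    obtain ⟨σ, hσ⟩ := heven
    have hS2 : 2 ≤ S := by omega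
    have hmono' : ∀ i j : ℕ, i ≤ j → j < n → d' j ≤ d' i := by
      intro i j hij hjn
      have hmij : d j ≤ d i := hmono i j hij hjn
      by_cases hit : i = t
      · rw [hit, hd't]
        by_cases hjt : j = t
        · rw [hjt, hd't]
        · by_cases hjs : j = s
          · rw [hjs, hd's]
            have := hmono t s (by omega) hs_lt
            omega
          · rw [hd'o j hjt hjs]
            rcases hcase with ⟨h, hts1⟩ | h
            · have hjgt : s < j := by omega
              have := hzero j hjgt hjn
              omega
            · have h2 := h j (by omega) hjn
              omega
      · by_cases his : i = s
        · rw [his, hd's]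
          by_cases h2 : j = s
          · rw [h2, hd's]
          · have h3 := hzero j (by omega) hjn
            rw [hd'o j (by omega) h2]
            omega
        · rw [hd'o i hit his]
          have h3 : d' j ≤ d j := by
            by_cases h4 : j = t
            · rw [h4, hd't]; omega
            · by_cases h5 : j = s
              · rw [h5, hd's]; omega
              · rw [hd'o j h4 h5]
          omega
    have heven' : Even (∑ i ∈ Finset.range n, d' i) := ⟨σ - 1, by omega⟩
    have hEG'0 := EGpres n s t d hmono ⟨σ, hσ⟩ hEG hs_lt hds ht_lt hdt hblock
      (hcase.imp (fun h => h.1) (fun h => h))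
    have hEG' : ∀ j : ℕ, 1 ≤ j → j ≤ n →
        ∑ i ∈ Finset.range j, d' i ≤ j * (j - 1) + ∑ i ∈ Finset.Ico j n, min (d' i) j :=
      fun j h1 h2 => hEG'0 j h1 h2
    obtain ⟨G', inst', hdeg'⟩ := IH (S - 2) (by omega) d' (by omega) hmono' heven' hEG'
    -- the two special vertices
    set vt : Fin n := ⟨t, by omega⟩ with hvt
    set vs : Fin n := ⟨s, hs_lt⟩ with hvs
    have hne : vt ≠ vs := by
      intro hc
      have := congrArg Fin.val hc
      simp only [hvt, hvs] at this
      omega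
    have hdeg't : G'.degree vt = d t - 1 := by rw [hdeg' vt]; exact hd't
    have hdeg's : G'.degree vs = d s - 1 := by rw [hdeg' vs]; exact hd's
    by_cases hadj : G'.Adj vt vs
    · -- t and s adjacent in G' : need a swap
      have hd02 : 2 ≤ d 0 := by
        have h1 : vs ∈ G'.neighborFinset vt := (SimpleGraph.mem_neighborFinset _ _ _).2 hadj
        have h2 : 0 < (G'.neighborFinset vt).card := Finset.card_pos.2 ⟨vs, h1⟩
        rw [G'.card_neighborFinset_eq_degree, hdeg't, hdt] at h2
        omega
      have hcardNt : (G'.neighborFinset vt).card = d 0 - 1 := by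
        rw [G'.card_neighborFinset_eq_degree, hdeg't, hdt]
      -- find w with w.val < s, w ≠ vt, not adjacent to vt
      have hBcard : s - 1 ≤ (Finset.univ.filter (fun u : Fin n => u.val < s ∧ u ≠ vt)).card := by
        have hinj := Finset.card_le_card_of_injOn
          (fun i : ℕ => (⟨min i (n-1), by omega⟩ : Fin n))
          (s := (Finset.range s).erase t)
          (t := Finset.univ.filter (fun u : Fin n => u.val < s ∧ u ≠ vt))
          ?_ ?_
        · rw [Finset.card_erase_of_mem (Finset.mem_range.2 ht_lt), Finset.card_range] at hinj
          exact hinj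
        · intro a ha
          rw [Finset.mem_coe, Finset.mem_erase, Finset.mem_range] at ha
          rw [Finset.mem_coe, Finset.mem_filter]
          have hmin : min a (n-1) = a := by omega
          refine ⟨Finset.mem_univ _, by simp [hmin]; omega, ?_⟩
          intro hc
          have := congrArg Fin.val hc
          simp only [hvt, hmin] at this
          exact ha.1 this
        · intro a ha b hb hab
          rw [Finset.coe_erase, Set.mem_diff] at ha hb
          have ha2 := Finset.mem_range.1 (Finset.mem_coe.1 ha.1)
          have hb2 := Finset.mem_range.1 (Finset.mem_coe.1 hb.1)
          have := congrArg Fin.val hab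
          simp only at this
          omega
      have hIcard : ((Finset.univ.filter (fun u : Fin n => u.val < s ∧ u ≠ vt)) ∩
          G'.neighborFinset vt).card ≤ d 0 - 2 := by
        have hsub : (Finset.univ.filter (fun u : Fin n => u.val < s ∧ u ≠ vt)) ∩
            G'.neighborFinset vt ⊆ (G'.neighborFinset vt).erase vs := by
          intro u hu
          rw [Finset.mem_inter, Finset.mem_filter] at hu
          rw [Finset.mem_erase]
          refine ⟨?_, hu.2⟩
          intro hc
          have := congrArg Fin.val hc
          simp only [hvs] at this
          have := hu.1.2.1
          omega
        have h1 := Finset.card_le_card hsub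
        rw [Finset.card_erase_of_mem ((SimpleGraph.mem_neighborFinset _ _ _).2 hadj),
          hcardNt] at h1
        omega
      have hWne : ((Finset.univ.filter (fun u : Fin n => u.val < s ∧ u ≠ vt)) \
          G'.neighborFinset vt).Nonempty := by
        rw [← Finset.card_pos]
        have h1 := Finset.card_inter_add_card_sdiff
          (Finset.univ.filter (fun u : Fin n => u.val < s ∧ u ≠ vt)) (G'.neighborFinset vt)
        omega
      obtain ⟨w, hw⟩ := hWne
      rw [Finset.mem_sdiff, Finset.mem_filter] at hw
      obtain ⟨⟨-, hwval, hwvt⟩, hwN⟩ := hw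
      have hnadjtw : ¬ G'.Adj vt w := fun hc => hwN ((SimpleGraph.mem_neighborFinset _ _ _).2 hc)
      have hwvs : w ≠ vs := by
        intro hc
        have := congrArg Fin.val hc
        simp only [hvs] at this
        omega
      have hwval_t : w.val ≠ t := by
        intro hc
        exact hwvt (Fin.ext (by simp only [hvt]; exact hc))
      have hwval_s : w.val ≠ s := by omega
      have hdw : d s ≤ d w.val := hmono w.val s (by omega) hs_lt
      have hcNw : (G'.neighborFinset w).card = d w.val := by
        rw [G'.card_neighborFinset_eq_degree, hdeg' w, hd'o w.val hwval_t hwval_s]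
      have hcNs : (G'.neighborFinset vs).card = d s - 1 := by
        rw [G'.card_neighborFinset_eq_degree, hdeg's]
      -- find x
      have hx : ∃ x : Fin n, G'.Adj w x ∧ x ≠ vs ∧ ¬ G'.Adj vs x := by
        by_contra hall
        push_neg at hall
        have hsub2 : (G'.neighborFinset w).erase vs ⊆
            ((G'.neighborFinset vs).erase vt).erase w := by
          intro y hy
          rw [Finset.mem_erase, SimpleGraph.mem_neighborFinset] at hy
          obtain ⟨hy1, hy2⟩ := hy
          rw [Finset.mem_erase, Finset.mem_erase, SimpleGraph.mem_neighborFinset]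
          refine ⟨fun hc => G'.irrefl (by rw [hc] at hy2; exact hy2), ?_,
            hall y hy2 hy1⟩
          intro hc
          exact hnadjtw (by rw [hc] at hy2; exact hy2.symm)
        have h3 := Finset.card_le_card hsub2
        by_cases hA : G'.Adj w vs
        · have h1 : ((G'.neighborFinset w).erase vs).card = d w.val - 1 := by
            rw [Finset.card_erase_of_mem ((SimpleGraph.mem_neighborFinset _ _ _).2 hA), hcNw]
          have hwinN : w ∈ (G'.neighborFinset vs).erase vt := by
            rw [Finset.mem_erase, SimpleGraph.mem_neighborFinset]
            exact ⟨hwvt, hA.symm⟩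
          have h2 : (((G'.neighborFinset vs).erase vt).erase w).card = d s - 1 - 1 - 1 := by
            rw [Finset.card_erase_of_mem hwinN,
              Finset.card_erase_of_mem ((SimpleGraph.mem_neighborFinset _ _ _).2 hadj.symm),
              hcNs]
          have hpair : ({vt, w} : Finset (Fin n)) ⊆ G'.neighborFinset vs := by
            intro y hy
            rw [Finset.mem_insert, Finset.mem_singleton] at hy
            rw [SimpleGraph.mem_neighborFinset]
            rcases hy with rfl | rfl
            · exact hadj.symm
            · exact hA.symm
          have hpc : ({vt, w} : Finset (Fin n)).card = 2 :=
            Finset.card_pair (fun hc => hwvt hc.symm)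
          have h4 := Finset.card_le_card hpair
          rw [hpc, hcNs] at h4
          omega
        · have h1 : ((G'.neighborFinset w).erase vs).card = d w.val := by
            rw [Finset.erase_eq_of_notMem
              (fun hc => hA ((SimpleGraph.mem_neighborFinset _ _ _).1 hc)), hcNw]
          have h2 : (((G'.neighborFinset vs).erase vt).erase w).card ≤ d s - 1 - 1 := by
            have h5 := Finset.card_erase_le
              (s := (G'.neighborFinset vs).erase vt) (a := w)
            rw [Finset.card_erase_of_mem
              ((SimpleGraph.mem_neighborFinset _ _ _).2 hadj.symm), hcNs] at h5
            exact h5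
          have h4 : 1 ≤ d s - 1 := by
            have h5 : 0 < (G'.neighborFinset vs).card :=
              Finset.card_pos.2 ⟨vt, (SimpleGraph.mem_neighborFinset _ _ _).2 hadj.symm⟩
            omega
          omega
      obtain ⟨x, hwx, hxvs, hnadjsx⟩ := hx
      have hxvt : x ≠ vt := fun hc => hnadjtw (by rw [hc] at hwx; exact hwx.symm)
      have hwx_ne : w ≠ x := G'.ne_of_adj hwx
      have hxval_t : x.val ≠ t := fun hc => hxvt (Fin.ext (by simp only [hvt]; exact hc))
      have hxval_s : x.val ≠ s := fun hc => hxvs (Fin.ext (by simp only [hvs]; exact hc))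
      -- build the graph : delete wx, add (vt,w) and (vs,x)
      have hne_tw : vt ≠ w := Ne.symm hwvt
      have hne_sx : vs ≠ x := Ne.symm hxvs
      have hnadj1 : ¬ (delE G' w x).Adj vt w := fun h => hnadjtw h.1
      have hnadj2 : ¬ (addE (delE G' w x) vt w).Adj vs x := by
        rw [adj_addE _ hne_tw]
        rintro (h | ⟨h1, h2⟩ | ⟨h1, h2⟩)
        · exact hnadjsx h.1
        · exact hne h1.symm
        · exact hwvs h1.symm
      refine ⟨addE (addE (delE G' w x) vt w) vs x, instDecAddE _ _ _, ?_⟩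
      have htx : vt ≠ x := fun h => hxvt h.symm
      have hsw : vs ≠ w := fun h => hwvs h.symm
      clear IH hEG hEG'0 hEG' hmono' heven' hsum2 hcase hblock hzero
      intro v
      have E1 := degree_addE (addE (delE G' w x) vt w) hne_sx hnadj2 v
      have E2 := degree_addE (delE G' w x) hne_tw hnadj1 v
      have E3 := degree_delE G' hwx v
      rw [hdeg' v] at E3
      by_cases h1 : v = vt
      · have i1 : (if v = vs ∨ v = x then (1:ℕ) else 0) = 0 :=
          if_neg (not_or.mpr ⟨fun hc => hne (h1.symm.trans hc),
            fun hc => htx (h1.symm.trans hc)⟩)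
        have i2 : (if v = vt ∨ v = w then (1:ℕ) else 0) = 1 := if_pos (Or.inl h1)
        have i3 : (if v = w ∨ v = x then (1:ℕ) else 0) = 0 :=
          if_neg (not_or.mpr ⟨fun hc => hne_tw (h1.symm.trans hc),
            fun hc => htx (h1.symm.trans hc)⟩)
        rw [E1, E2, i1, i2]
        rw [i3] at E3
        have hdv : d' v.val = d t - 1 := by rw [h1]; exact hd't
        have hdv2 : d v.val = d t := by rw [h1]
        generalize hX : (delE G' w x).degree v = X at E3 ⊢
        rw [Nat.add_zero] at E3
        rw [Nat.add_zero, hdv2, show X = d t - 1 from E3.symm.trans hdv]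
        exact Nat.sub_add_cancel hdt1
      · by_cases h2 : v = vs
        · have i1 : (if v = vs ∨ v = x then (1:ℕ) else 0) = 1 := if_pos (Or.inl h2)
          have i2 : (if v = vt ∨ v = w then (1:ℕ) else 0) = 0 :=
            if_neg (not_or.mpr ⟨fun hc => hne (hc.symm.trans h2),
              fun hc => hsw (h2.symm.trans hc)⟩)
          have i3 : (if v = w ∨ v = x then (1:ℕ) else 0) = 0 :=
            if_neg (not_or.mpr ⟨fun hc => hsw (h2.symm.trans hc),
              fun hc => hne_sx (h2.symm.trans hc)⟩)
          rw [E1, E2, i1, i2]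
          rw [i3] at E3
          have hdv : d' v.val = d s - 1 := by rw [h2]; exact hd's
          have hdv2 : d v.val = d s := by rw [h2]
          generalize hX : (delE G' w x).degree v = X at E3 ⊢
          rw [Nat.add_zero] at E3
          rw [Nat.add_zero, hdv2, show X = d s - 1 from E3.symm.trans hdv]
          exact Nat.sub_add_cancel hds
        · by_cases h3 : v = w
          · have i1 : (if v = vs ∨ v = x then (1:ℕ) else 0) = 0 :=
              if_neg (not_or.mpr ⟨fun hc => hwvs (h3.symm.trans hc),
                fun hc => hwx_ne (h3.symm.trans hc)⟩)
            have i2 : (if v = vt ∨ v = w then (1:ℕ) else 0) = 1 := if_pos (Or.inr h3)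
            have i3 : (if v = w ∨ v = x then (1:ℕ) else 0) = 1 := if_pos (Or.inl h3)
            rw [E1, E2, i1, i2]
            rw [i3] at E3
            have hdv : d' v.val = d v.val := by
              rw [h3]; exact hd'o w.val hwval_t hwval_s
            generalize hX : (delE G' w x).degree v = X at E3 ⊢
            rw [Nat.add_zero, ← hdv]
            exact E3.symm
          · by_cases h4 : v = x
            · have i1 : (if v = vs ∨ v = x then (1:ℕ) else 0) = 1 := if_pos (Or.inr h4)
              have i2 : (if v = vt ∨ v = w then (1:ℕ) else 0) = 0 :=
                if_neg (not_or.mpr ⟨fun hc => hxvt (h4.symm.trans hc),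
                  fun hc => hwx_ne (h4.symm.trans hc).symm⟩)
              have i3 : (if v = w ∨ v = x then (1:ℕ) else 0) = 1 := if_pos (Or.inr h4)
              rw [E1, E2, i1, i2]
              rw [i3] at E3
              have hdv : d' v.val = d v.val := by
                rw [h4]; exact hd'o x.val hxval_t hxval_s
              generalize hX : (delE G' w x).degree v = X at E3 ⊢
              rw [Nat.add_zero, ← hdv]
              exact E3.symm
            · have i1 : (if v = vs ∨ v = x then (1:ℕ) else 0) = 0 :=
                if_neg (not_or.mpr ⟨h2, h4⟩)
              have i2 : (if v = vt ∨ v = w then (1:ℕ) else 0) = 0 :=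
                if_neg (not_or.mpr ⟨h1, h3⟩)
              have i3 : (if v = w ∨ v = x then (1:ℕ) else 0) = 0 :=
                if_neg (not_or.mpr ⟨h3, h4⟩)
              rw [E1, E2, i1, i2]
              rw [i3] at E3
              have hdv : d' v.val = d v.val := by
                refine hd'o v.val (fun hc => h1 (Fin.ext ?_)) (fun hc => h2 (Fin.ext ?_))
                · simp only [hvt]; exact hc
                · simp only [hvs]; exact hc
              generalize hX : (delE G' w x).degree v = X at E3 ⊢
              rw [Nat.add_zero] at E3
              simp only [Nat.add_zero]
              rw [← hdv]
              exact E3.symm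
    · -- t and s not adjacent : just add the edge
      refine ⟨addE G' vt vs, instDecAddE _ _ _, ?_⟩
      intro v
      rw [degree_addE G' hne hadj v, hdeg' v]
      by_cases h1 : v = vt
      · rw [if_pos (Or.inl h1)]
        have hdv : d' v.val = d t - 1 := by rw [h1]; exact hd't
        have hdv2 : d v.val = d t := by rw [h1]
        omega
      · by_cases h2 : v = vs
        · rw [if_pos (Or.inr h2)]
          have hdv : d' v.val = d s - 1 := by rw [h2]; exact hd's
          have hdv2 : d v.val = d s := by rw [h2]
          omega
        · rw [if_neg (by tauto)]
          have hdv : d' v.val = d v.val := by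
            refine hd'o v.val (fun hc => h1 (Fin.ext ?_)) (fun hc => h2 (Fin.ext ?_))
            · simp only [hvt]; exact hc
            · simp only [hvs]; exact hc
          omega

/-- Erdős–Gallai, sufficiency: a nonincreasing natural sequence with even sum
satisfying the Erdős–Gallai inequalities is realizable as the degree sequence of
a simple graph on `n` vertices. -/
theorem erdos_gallai_sufficient (n : ℕ) (d : ℕ → ℕ)
    (hmono : ∀ i j : ℕ, i ≤ j → j < n → d j ≤ d i)
    (heven : Even (∑ i ∈ Finset.range n, d i))
    (hEG : ∀ j : ℕ, 1 ≤ j → j ≤ n →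
      ∑ i ∈ Finset.range j, d i ≤ j * (j - 1) + ∑ i ∈ Finset.Ico j n, min (d i) j) :
    ∃ (G : SimpleGraph (Fin n)) (_ : DecidableRel G.Adj),
      ∀ v : Fin n, G.degree v = d v.val :=
  EGaux n (∑ i ∈ Finset.range n, d i) d rfl hmono heven hEG
end

section
/- There exists a time-varying graph G = (G_1, G_2) on 4 vertices such that each slice G_t has a 2-anonymous degree sequence, yet the matrix of temporal degree vectors is not 2-anonymous (i.e., some row of the degree matrix differs from all other rows). -/
def edgeG (u v : Fin 4) (h : u ≠ v) : SimpleGraph (Fin 4) where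
  Adj a b := (a = u ∧ b = v) ∨ (a = v ∧ b = u)
  symm := by constructor; tauto
  loopless := by
    constructor; intro a ha
    rcases ha with ⟨h1, h2⟩ | ⟨h1, h2⟩ <;> exact h (h2 ▸ h1 ▸ rfl)

instance (u v : Fin 4) (h : u ≠ v) : DecidableRel (edgeG u v h).Adj := fun a b => by
  unfold edgeG; simp only; infer_instance

/-- There is a time-varying graph `(G₁, G₂)` on 4 vertices such that each slice
has a 2-anonymous degree sequence, yet the matrix of temporal degree vectors is
not 2-anonymous: some vertex has a temporal degree vector different from that of
every other vertex. -/
theorem slice_anonymity_not_sufficient :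
    ∃ (G₁ G₂ : SimpleGraph (Fin 4)) (_ : DecidableRel G₁.Adj) (_ : DecidableRel G₂.Adj),
      (∀ i : Fin 4,
        2 ≤ (Finset.univ.filter (fun j : Fin 4 => G₁.degree j = G₁.degree i)).card) ∧
      (∀ i : Fin 4,
        2 ≤ (Finset.univ.filter (fun j : Fin 4 => G₂.degree j = G₂.degree i)).card) ∧
      ∃ i : Fin 4, ∀ j : Fin 4, j ≠ i →
        ¬ (G₁.degree j = G₁.degree i ∧ G₂.degree j = G₂.degree i) := by
  refine ⟨edgeG 0 1 (by decide), edgeG 1 2 (by decide), inferInstance, inferInstance, ?_, ?_, ?_⟩ <;> decide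
end
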